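/- arXiv:math/0311522 — 3 statements merged into one kernel-verified Lean document; each statement's English description precedes it below -/
import Mathlib

section
/- Let R be an H-module algebra and E a non-empty subset of R. Then the H-ideal of R generated by E equals H·E + R(H·E) + (H·E)R + R(H·E)R. -/
open scoped TensorProduct

class HModAlg (k H R : Type*) [CommRing k] [Ring H] [Algebra k H]
    [Coalgebra k H] [NonUnitalRing R] [Module k R]
    [SMulCommClass k R R] [IsScalarTower k R R] where
  hsmul : H →ₗ[k] R →ₗ[k] R
  one_hsmul : ∀ r : R, hsmul 1 r = r
  mul_hsmul : ∀ (h h' : H) (r : R), hsmul (h * h') r = hsmul h (hsmul h' r)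
  hsmul_mul : ∀ (h : H) (a b : R),
    hsmul h (a * b) =
      LinearMap.mul' k R
        (TensorProduct.map (hsmul.flip a) (hsmul.flip b) (Coalgebra.comul h))

/-- product f 0 * f 1 * ⋯ * f n -/
def prodSeq {R : Type*} [Mul R] (f : ℕ → R) : ℕ → R
  | 0 => f 0
  | n + 1 => prodSeq f n * f (n + 1)

/-- `I` is a nilpotent subset: some power of it vanishes. -/
def IsNilpotentSet {R : Type*} [Mul R] [Zero R] (I : Set R) : Prop :=
  ∃ n : ℕ, ∀ f : ℕ → R, (∀ i, f i ∈ I) → prodSeq f n = 0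

/-- `I` is nilpotent modulo `J`. -/
def IsNilpotentSetMod {R : Type*} [Mul R] (I J : Set R) : Prop :=
  ∃ n : ℕ, ∀ f : ℕ → R, (∀ i, f i ∈ I) → prodSeq f n ∈ J

section Defs

variable (k H : Type*) {R : Type*} [CommRing k] [Ring H] [Algebra k H]
  [Coalgebra k H] [NonUnitalRing R] [Module k R]
  [SMulCommClass k R R] [IsScalarTower k R R] [HModAlg k H R]

/-- The action of `h : H` on `r : R`. -/
def hact (h : H) (r : R) : R := HModAlg.hsmul (k := k) h r

/-- `I` is an `H`-ideal of the `H`-module (sub)algebra `B ⊆ R`. -/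
structure IsHIdealIn (B I : Set R) : Prop where
  subset : I ⊆ B
  zero_mem : (0 : R) ∈ I
  add_mem : ∀ {x y : R}, x ∈ I → y ∈ I → x + y ∈ I
  neg_mem : ∀ {x : R}, x ∈ I → -x ∈ I
  mul_mem_left : ∀ {x : R}, x ∈ B → ∀ {y : R}, y ∈ I → x * y ∈ I
  mul_mem_right : ∀ {x : R}, x ∈ I → ∀ {y : R}, y ∈ B → x * y ∈ I
  hsmul_mem : ∀ (h : H) {x : R}, x ∈ I → hact k H h x ∈ I

/-- `I` is an `H`-ideal of `R`. -/
def IsHIdeal (I : Set R) : Prop := IsHIdealIn k H Set.univ I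

/-- `R` is `H`-semiprime. -/
def IsHSemiprime : Prop :=
  ∀ I : Set R, IsHIdeal k H I → IsNilpotentSet I → I = {0}

/-- The subalgebra `B` of `R` is `H`-semiprime. -/
def IsHSemiprimeIn (B : Set R) : Prop :=
  ∀ I : Set R, IsHIdealIn k H B I → IsNilpotentSet I → I = {0}

/-- `R` is `H`-prime. -/
def IsHPrime : Prop :=
  ∀ I J : Set R, IsHIdeal k H I → IsHIdeal k H J →
    (∀ a ∈ I, ∀ b ∈ J, a * b = 0) → I = {0} ∨ J = {0}

/-- The `H`-ideal of `R` generated by `E`. -/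
def genHIdeal (E : Set R) : Set R := ⋂₀ {I : Set R | IsHIdeal k H I ∧ E ⊆ I}

end Defs



section MyHelpers

variable {k H : Type*} {R : Type*} [CommRing k] [Ring H] [Algebra k H]
  [Coalgebra k H] [NonUnitalRing R] [Module k R]
  [SMulCommClass k R R] [IsScalarTower k R R] [HModAlg k H R]

lemma my_hact_one (r : R) : hact k H (1 : H) r = r := HModAlg.one_hsmul r

lemma my_hact_mul (h h' : H) (r : R) :
    hact k H (h * h') r = hact k H h (hact k H h' r) := HModAlg.mul_hsmul h h' r

lemma my_hact_algebraMap (c : k) (x : R) : hact k H (algebraMap k H c) x = c • x := by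
  have h1 : (algebraMap k H c) = c • (1 : H) := Algebra.algebraMap_eq_smul_one c
  show (HModAlg.hsmul (k := k) (algebraMap k H c)) x = c • x
  rw [h1, map_smul]
  exact congrArg (c • ·) (HModAlg.one_hsmul x)

lemma my_hact_mul_mem (h : H) (a b : R) (M : Submodule k R)
    (hgen : ∀ x y : H, hact k H x a * hact k H y b ∈ M) :
    hact k H h (a * b) ∈ M := by
  have hrw : hact k H h (a * b) =
      ((LinearMap.mul' k R).comp
        (TensorProduct.map ((HModAlg.hsmul (k := k) (H := H) (R := R)).flip a)
          ((HModAlg.hsmul (k := k) (H := H) (R := R)).flip b)))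
        (Coalgebra.comul h) := HModAlg.hsmul_mul h a b
  rw [hrw]
  set φ := ((LinearMap.mul' k R).comp
        (TensorProduct.map ((HModAlg.hsmul (k := k) (H := H) (R := R)).flip a)
          ((HModAlg.hsmul (k := k) (H := H) (R := R)).flip b))) with hφ
  have htop : (Coalgebra.comul (R := k) h : H ⊗[k] H) ∈
      Submodule.span k { t : H ⊗[k] H | ∃ x y, x ⊗ₜ y = t } := by
    rw [TensorProduct.span_tmul_eq_top]; trivial
  refine Submodule.span_induction (p := fun t _ => φ t ∈ M) ?_ ?_ ?_ ?_ htop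
  · rintro t ⟨x, y, rfl⟩
    simpa [hφ, hact] using hgen x y
  · simp
  · intro u v _ _ hu hv; rw [map_add]; exact M.add_mem hu hv
  · intro c u _ hu; rw [map_smul]; exact M.smul_mem c hu

end MyHelpers

/-- the `H`-ideal generated by a non-empty set `E` equals
`H·E + R(H·E) + (H·E)R + R(H·E)R`. -/
theorem stmt1 {k H R : Type*} [CommRing k] [Ring H] [Algebra k H] [Coalgebra k H]
    [NonUnitalRing R] [Module k R] [SMulCommClass k R R] [IsScalarTower k R R]
    [HModAlg k H R] (E : Set R) (hE : E.Nonempty) :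
    genHIdeal k H E =
      ↑(Submodule.span k
        ({x : R | ∃ h : H, ∃ e ∈ E, x = hact k H h e} ∪
         {x : R | ∃ h : H, ∃ e ∈ E, ∃ r : R, x = r * hact k H h e} ∪
         {x : R | ∃ h : H, ∃ e ∈ E, ∃ r : R, x = hact k H h e * r} ∪
         {x : R | ∃ h : H, ∃ e ∈ E, ∃ r s : R, x = r * hact k H h e * s})) := by
  set M := Submodule.span k
        ({x : R | ∃ h : H, ∃ e ∈ E, x = hact k H h e} ∪
         {x : R | ∃ h : H, ∃ e ∈ E, ∃ r : R, x = r * hact k H h e} ∪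
         {x : R | ∃ h : H, ∃ e ∈ E, ∃ r : R, x = hact k H h e * r} ∪
         {x : R | ∃ h : H, ∃ e ∈ E, ∃ r s : R, x = r * hact k H h e * s}) with hM
  have m1 : ∀ (h : H), ∀ e ∈ E, hact k H h e ∈ M := fun h e he =>
    Submodule.subset_span (by
      simp only [Set.mem_union]; exact Or.inl (Or.inl (Or.inl ⟨h, e, he, rfl⟩)))
  have m2 : ∀ (h : H), ∀ e ∈ E, ∀ r : R, r * hact k H h e ∈ M := fun h e he r =>
    Submodule.subset_span (by
      simp only [Set.mem_union]; exact Or.inl (Or.inl (Or.inr ⟨h, e, he, r, rfl⟩)))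
  have m3 : ∀ (h : H), ∀ e ∈ E, ∀ r : R, hact k H h e * r ∈ M := fun h e he r =>
    Submodule.subset_span (by
      simp only [Set.mem_union]; exact Or.inl (Or.inr ⟨h, e, he, r, rfl⟩))
  have m4 : ∀ (h : H), ∀ e ∈ E, ∀ r s : R, r * hact k H h e * s ∈ M := fun h e he r s =>
    Submodule.subset_span (by
      simp only [Set.mem_union]; exact Or.inr ⟨h, e, he, r, s, rfl⟩)
  have mulL : ∀ z : R, ∀ y ∈ M, z * y ∈ M := by
    intro z y hy
    refine Submodule.span_induction (p := fun y _ => z * y ∈ M) ?_ (by simp) ?_ ?_ hy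
    · rintro x hx
      simp only [Set.mem_union] at hx
      rcases hx with ((⟨h, e, he, rfl⟩ | ⟨h, e, he, r, rfl⟩) | ⟨h, e, he, r, rfl⟩) |
        ⟨h, e, he, r, s, rfl⟩
      · exact m2 h e he z
      · rw [← mul_assoc]; exact m2 h e he (z * r)
      · rw [← mul_assoc]; exact m4 h e he z r
      · rw [← mul_assoc, ← mul_assoc]; exact m4 h e he (z * r) s
    · intro a b _ _ ha hb; rw [mul_add]; exact M.add_mem ha hb
    · intro c a _ ha; rw [mul_smul_comm]; exact M.smul_mem c ha
  have mulR : ∀ z : R, ∀ y ∈ M, y * z ∈ M := by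
    intro z y hy
    refine Submodule.span_induction (p := fun y _ => y * z ∈ M) ?_ (by simp) ?_ ?_ hy
    · rintro x hx
      simp only [Set.mem_union] at hx
      rcases hx with ((⟨h, e, he, rfl⟩ | ⟨h, e, he, r, rfl⟩) | ⟨h, e, he, r, rfl⟩) |
        ⟨h, e, he, r, s, rfl⟩
      · exact m3 h e he z
      · exact m4 h e he r z
      · rw [mul_assoc]; exact m3 h e he (r * z)
      · rw [mul_assoc]; exact m4 h e he r (s * z)
    · intro a b _ _ ha hb; rw [add_mul]; exact M.add_mem ha hb
    · intro c a _ ha; rw [smul_mul_assoc]; exact M.smul_mem c ha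
  have mulR2 : ∀ y ∈ Submodule.span k
      {x : R | ∃ h : H, ∃ e ∈ E, ∃ r : R, x = r * hact k H h e}, ∀ z : R, y * z ∈ M := by
    intro y hy z
    refine Submodule.span_induction (p := fun y _ => y * z ∈ M) ?_ (by simp) ?_ ?_ hy
    · rintro x ⟨h, e, he, r, rfl⟩
      exact m4 h e he r z
    · intro a b _ _ ha hb; rw [add_mul]; exact M.add_mem ha hb
    · intro c a _ ha; rw [smul_mul_assoc]; exact M.smul_mem c ha
  have hactM : ∀ (h : H), ∀ y ∈ M, hact k H h y ∈ M := by
    intro h y hy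
    refine Submodule.span_induction (p := fun y _ => hact k H h y ∈ M) ?_ ?_ ?_ ?_ hy
    · rintro x hx
      simp only [Set.mem_union] at hx
      rcases hx with ((⟨h', e, he, rfl⟩ | ⟨h', e, he, r, rfl⟩) | ⟨h', e, he, r, rfl⟩) |
        ⟨h', e, he, r, s, rfl⟩
      · rw [← my_hact_mul]; exact m1 (h * h') e he
      · exact my_hact_mul_mem h r _ M (fun x y => by
          rw [← my_hact_mul]; exact m2 (y * h') e he (hact k H x r))
      · exact my_hact_mul_mem h _ r M (fun x y => by
          rw [← my_hact_mul]; exact m3 (x * h') e he (hact k H y r))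
      · refine my_hact_mul_mem h (r * hact k H h' e) s M (fun x y => ?_)
        have h2 : hact k H x (r * hact k H h' e) ∈ Submodule.span k
            {u : R | ∃ h : H, ∃ e ∈ E, ∃ r : R, u = r * hact k H h e} := by
          refine my_hact_mul_mem x r _ _ (fun u v => ?_)
          rw [← my_hact_mul]
          exact Submodule.subset_span ⟨v * h', e, he, hact k H u r, rfl⟩
        exact mulR2 _ h2 _
    · have h0 : hact k H h (0 : R) = 0 := map_zero (HModAlg.hsmul (k := k) h)
      show hact k H h (0 : R) ∈ M
      rw [h0]; exact M.zero_mem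
    · intro a b _ _ ha hb
      have hadd : hact k H h (a + b) = hact k H h a + hact k H h b :=
        map_add (HModAlg.hsmul (k := k) h) a b
      show hact k H h (a + b) ∈ M
      rw [hadd]; exact M.add_mem ha hb
    · intro c a _ ha
      have hsm : hact k H h (c • a) = c • hact k H h a :=
        map_smul (HModAlg.hsmul (k := k) h) c a
      show hact k H h (c • a) ∈ M
      rw [hsm]; exact M.smul_mem c ha
  have hEM : E ⊆ (M : Set R) := by
    intro e he
    have h1 := m1 (1 : H) e he
    rwa [my_hact_one (k := k) (H := H) e] at h1
  have hId : IsHIdeal k H (M : Set R) := by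
    exact ⟨fun _ _ => trivial, M.zero_mem, fun hx hy => M.add_mem hx hy,
      fun hx => M.neg_mem hx,
      fun {x} _ {y} hy => mulL x y hy, fun {x} hx {y} _ => mulR y x hx,
      fun h {x} hx => hactM h x hx⟩
  apply Set.Subset.antisymm
  · intro x hx
    exact Set.mem_sInter.mp hx (M : Set R) ⟨hId, hEM⟩
  · intro x hx
    rw [genHIdeal, Set.mem_sInter]
    rintro I ⟨hI, hEI⟩
    have hI' : IsHIdealIn k H Set.univ I := hI
    refine Submodule.span_induction (p := fun x _ => x ∈ I) ?_ hI'.zero_mem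
      (fun a b _ _ ha hb => hI'.add_mem ha hb) ?_ hx
    · rintro g hg
      simp only [Set.mem_union] at hg
      rcases hg with ((⟨h, e, he, rfl⟩ | ⟨h, e, he, r, rfl⟩) | ⟨h, e, he, r, rfl⟩) |
        ⟨h, e, he, r, s, rfl⟩
      · exact hI'.hsmul_mem h (hEI he)
      · exact hI'.mul_mem_left trivial (hI'.hsmul_mem h (hEI he))
      · exact hI'.mul_mem_right (hI'.hsmul_mem h (hEI he)) trivial
      · exact hI'.mul_mem_right (hI'.mul_mem_left trivial (hI'.hsmul_mem h (hEI he))) trivial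
    · intro c a _ ha
      show c • a ∈ I
      rw [← my_hact_algebraMap (H := H) c a]
      exact hI'.hsmul_mem _ ha
end

section
/- Let R be an H-module algebra, B an H-ideal of R, and C an H-ideal of B. Then (C)³ ⊆ C, where (C) is the H-ideal of R generated by C. -/
open scoped TensorProduct

section Aux

variable {k H R : Type*} [CommRing k] [Ring H] [Algebra k H] [Coalgebra k H]
    [NonUnitalRing R] [Module k R] [SMulCommClass k R R] [IsScalarTower k R R]
    [HModAlg k H R]

lemma mul'_map_mem (P : AddSubgroup R) (F G : H →ₗ[k] R) (t : H ⊗[k] H)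
    (hFG : ∀ h₁ h₂ : H, F h₁ * G h₂ ∈ P) :
    LinearMap.mul' k R (TensorProduct.map F G t) ∈ P := by
  induction t with
  | zero => simpa using P.zero_mem
  | tmul a b => simpa using hFG a b
  | add a b ha hb => simpa [map_add] using P.add_mem ha hb

lemma hact_mul_mem (P : AddSubgroup R) (h : H) (a b : R)
    (hab : ∀ h₁ h₂ : H, hact k H h₁ a * hact k H h₂ b ∈ P) :
    hact k H h (a * b) ∈ P := by
  rw [hact, HModAlg.hsmul_mul]
  exact mul'_map_mem P _ _ _ (fun h₁ h₂ => by
    simpa [LinearMap.flip_apply, hact] using hab h₁ h₂)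

end Aux

/-- if `B` is an `H`-ideal of `R` and `C` an `H`-ideal of `B`, then
`(C)³ ⊆ C` where `(C)` is the `H`-ideal of `R` generated by `C`. -/
theorem stmt2 {k H R : Type*} [CommRing k] [Ring H] [Algebra k H] [Coalgebra k H]
    [NonUnitalRing R] [Module k R] [SMulCommClass k R R] [IsScalarTower k R R]
    [HModAlg k H R] (B C : Set R)
    (hB : IsHIdeal k H B) (hC : IsHIdealIn k H B C) :
    ∀ x ∈ genHIdeal k H C, ∀ y ∈ genHIdeal k H C, ∀ z ∈ genHIdeal k H C,
      x * y * z ∈ C := by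
  classical
  -- generating set: C ∪ RC ∪ CR ∪ RCR
  set S : Set R := {x | x ∈ C ∨ (∃ r c, c ∈ C ∧ x = r * c) ∨
      (∃ c r, c ∈ C ∧ x = c * r) ∨ (∃ r c s, c ∈ C ∧ x = r * c * s)} with hS
  set D : AddSubgroup R := AddSubgroup.closure S with hD
  have hCS : C ⊆ S := fun c hc => Or.inl hc
  have hCD : C ⊆ (D : Set R) := fun c hc => AddSubgroup.subset_closure (hCS hc)
  have hSD : S ⊆ (D : Set R) := fun s hs => AddSubgroup.subset_closure hs
  -- D is closed under left multiplication by R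
  have hmul_left : ∀ (r : R) {d : R}, d ∈ D → r * d ∈ D := by
    intro r d hd
    induction hd using AddSubgroup.closure_induction with
    | mem s hs =>
      rcases hs with hs | ⟨r', c, hc, rfl⟩ | ⟨c, r', hc, rfl⟩ | ⟨r', c, s', hc, rfl⟩
      · exact hSD (Or.inr (Or.inl ⟨r, s, hs, rfl⟩))
      · exact hSD (by exact Or.inr (Or.inl ⟨r * r', c, hc, by rw [mul_assoc]⟩))
      · exact hSD (Or.inr (Or.inr (Or.inr ⟨r, c, r', hc, by rw [mul_assoc]⟩)))
      · exact hSD (Or.inr (Or.inr (Or.inr ⟨r * r', c, s', hc, by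
          rw [mul_assoc, mul_assoc, mul_assoc]⟩)))
    | zero => simpa using D.zero_mem
    | add a b _ _ ha hb => simpa [mul_add] using D.add_mem ha hb
    | neg a _ ha => simpa [mul_neg] using D.neg_mem ha
  -- D is closed under right multiplication by R
  have hmul_right : ∀ {d : R}, d ∈ D → ∀ (r : R), d * r ∈ D := by
    intro d hd r
    induction hd using AddSubgroup.closure_induction with
    | mem s hs =>
      rcases hs with hs | ⟨r', c, hc, rfl⟩ | ⟨c, r', hc, rfl⟩ | ⟨r', c, s', hc, rfl⟩
      · exact hSD (Or.inr (Or.inr (Or.inl ⟨s, r, hs, rfl⟩)))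
      · exact hSD (Or.inr (Or.inr (Or.inr ⟨r', c, r, hc, rfl⟩)))
      · exact hSD (Or.inr (Or.inr (Or.inl ⟨c, r' * r, hc, by rw [mul_assoc]⟩)))
      · exact hSD (Or.inr (Or.inr (Or.inr ⟨r', c, s' * r, hc, by
          rw [mul_assoc (r' * c)]⟩)))
    | zero => simpa using D.zero_mem
    | add a b _ _ ha hb => simpa [add_mul] using D.add_mem ha hb
    | neg a _ ha => simpa [neg_mul] using D.neg_mem ha
  -- D is closed under the H-action
  have hhact : ∀ {d : R}, d ∈ D → ∀ (h : H), hact k H h d ∈ D := by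
    intro d hd
    induction hd using AddSubgroup.closure_induction with
    | mem s hs =>
      intro h
      rcases hs with hs | ⟨r', c, hc, rfl⟩ | ⟨c, r', hc, rfl⟩ | ⟨r', c, s', hc, rfl⟩
      · exact hCD (hC.hsmul_mem h hs)
      · exact hact_mul_mem D h r' c (fun h₁ h₂ =>
          hSD (Or.inr (Or.inl ⟨hact k H h₁ r', hact k H h₂ c, hC.hsmul_mem h₂ hc, rfl⟩)))
      · exact hact_mul_mem D h c r' (fun h₁ h₂ =>
          hSD (Or.inr (Or.inr (Or.inl ⟨hact k H h₁ c, hact k H h₂ r', hC.hsmul_mem h₁ hc, rfl⟩))))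
      · exact hact_mul_mem D h (r' * c) s' (fun h₁ h₂ =>
          hmul_right (hact_mul_mem D h₁ r' c (fun g₁ g₂ =>
            hSD (Or.inr (Or.inl ⟨hact k H g₁ r', hact k H g₂ c, hC.hsmul_mem g₂ hc, rfl⟩))))
            (hact k H h₂ s'))
    | zero => intro h; simpa [hact] using D.zero_mem
    | add a b _ _ ha hb => intro h; simpa [hact, map_add] using D.add_mem (ha h) (hb h)
    | neg a _ ha => intro h; simpa [hact, map_neg] using D.neg_mem (ha h)
  have hhact' : ∀ (h : H) {d : R}, d ∈ D → hact k H h d ∈ D := fun h _ hd => hhact hd h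
  -- D is an H-ideal of R containing C
  have hDideal : IsHIdeal k H (D : Set R) :=
    { subset := Set.subset_univ _
      zero_mem := D.zero_mem
      add_mem := fun hx hy => D.add_mem hx hy
      neg_mem := fun hx => D.neg_mem hx
      mul_mem_left := fun {x} _ {y} hy => hmul_left x hy
      mul_mem_right := fun {x} hx {y} _ => hmul_right hx y
      hsmul_mem := fun h {x} hx => hhact' h hx }
  -- genHIdeal C ⊆ D and genHIdeal C ⊆ B
  have hgenD : genHIdeal k H C ⊆ (D : Set R) := fun x hx => hx _ ⟨hDideal, hCD⟩
  have hgenB : genHIdeal k H C ⊆ B := fun x hx => hx _ ⟨hB, hC.subset⟩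
  intro x hx y hy z hz
  have hxB : x ∈ B := hgenB hx
  have hzB : z ∈ B := hgenB hz
  have hyD : y ∈ D := hgenD hy
  clear hy
  -- B * D * B ⊆ C
  induction hyD using AddSubgroup.closure_induction with
  | mem s hs =>
    rcases hs with hs | ⟨r', c, hc, rfl⟩ | ⟨c, r', hc, rfl⟩ | ⟨r', c, s', hc, rfl⟩
    · exact hC.mul_mem_right (hC.mul_mem_left hxB hs) hzB
    · have : x * (r' * c) * z = (x * r') * c * z := by rw [← mul_assoc]
      rw [this]
      exact hC.mul_mem_right (hC.mul_mem_left (hB.mul_mem_right hxB trivial) hc) hzB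
    · have : x * (c * r') * z = x * c * (r' * z) := by rw [← mul_assoc, mul_assoc]
      rw [this]
      exact hC.mul_mem_right (hC.mul_mem_left hxB hc)
        (hB.mul_mem_left trivial hzB)
    · have : x * (r' * c * s') * z = ((x * r') * c) * (s' * z) := by
        rw [← mul_assoc, ← mul_assoc, mul_assoc (x * r' * c)]
      rw [this]
      exact hC.mul_mem_right (hC.mul_mem_left (hB.mul_mem_right hxB trivial) hc)
        (hB.mul_mem_left trivial hzB)
  | zero => simpa using hC.zero_mem
  | add a b _ _ ha hb => simpa [mul_add, add_mul] using hC.add_mem ha hb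
  | neg a _ ha => simpa [mul_neg, neg_mul] using hC.neg_mem ha
end

section
/- Let I be an H-ideal of an H-module algebra R such that I is H-semiprime as an H-module algebra. Then the left annihilator I_l = {a ∈ R : (H·a)I = 0}, the right annihilator I_r = {a ∈ R : I(H·a) = 0}, and the two-sided annihilator I* = {a ∈ R : (H·a)I = 0 = I(H·a)} all coincide, and I* is an H-ideal of R. -/
open scoped TensorProduct

section Aux

variable {k H R : Type*} [CommRing k] [Ring H] [Algebra k H] [Coalgebra k H]
    [NonUnitalRing R] [Module k R] [SMulCommClass k R R] [IsScalarTower k R R]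
    [HModAlg k H R]

lemma hact_zero (h : H) : hact k H h (0 : R) = 0 :=
  map_zero (HModAlg.hsmul (k := k) (R := R) h)

lemma hact_add (h : H) (x y : R) :
    hact k H h (x + y) = hact k H h x + hact k H h y :=
  map_add (HModAlg.hsmul (k := k) (R := R) h) x y

lemma hact_neg (h : H) (x : R) : hact k H h (-x) = -hact k H h x :=
  map_neg (HModAlg.hsmul (k := k) (R := R) h) x

lemma hact_hact (h h' : H) (x : R) :
    hact k H h (hact k H h' x) = hact k H (h * h') x :=
  (HModAlg.mul_hsmul h h' x).symm

/-- key structural lemma: any predicate closed under `0` and `+` which holds on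
all `(h₁·a)(h₂·b)` holds on `h·(ab)`. -/
lemma hact_mul_ind {P : R → Prop} (h0 : P 0)
    (hadd : ∀ {x y : R}, P x → P y → P (x + y)) (a b : R)
    (hgen : ∀ h₁ h₂ : H, P (hact k H h₁ a * hact k H h₂ b)) (h : H) :
    P (hact k H h (a * b)) := by
  show P (HModAlg.hsmul (k := k) h (a * b))
  rw [HModAlg.hsmul_mul]
  induction Coalgebra.comul (R := k) h using TensorProduct.induction_on with
  | zero => simpa using h0
  | tmul x y =>
      simpa [TensorProduct.map_tmul, LinearMap.mul'_apply, hact] using hgen x y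
  | add x y hx hy => simpa [map_add] using hadd hx hy

lemma left_to_right (I : Set R) (hI : IsHIdeal k H I) (hsp : IsHSemiprimeIn k H I)
    (a : R) (ha : ∀ h : H, ∀ i ∈ I, hact k H h a * i = 0) :
    ∀ h : H, ∀ i ∈ I, i * hact k H h a = 0 := by
  set G : Set R := {x | ∃ i ∈ I, ∃ h : H, x = i * hact k H h a} with hG
  set J := AddSubgroup.closure G with hJ
  have hGI : ∀ x ∈ G, x ∈ I := by
    rintro x ⟨i, hi, h, rfl⟩
    exact hI.mul_mem_right hi trivial
  have memI : ∀ x ∈ J, x ∈ I := by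
    intro x hx
    induction hx using AddSubgroup.closure_induction with
    | mem y hy => exact hGI y hy
    | zero => exact hI.zero_mem
    | add y z _ _ hy hz => exact hI.add_mem hy hz
    | neg y _ hy => exact hI.neg_mem hy
  have hideal : IsHIdealIn k H I (J : Set R) := by
    refine ⟨memI, J.zero_mem, fun hx hy => J.add_mem hx hy,
      fun hx => J.neg_mem hx, ?_, ?_, ?_⟩
    · intro x hx y hy
      induction hy using AddSubgroup.closure_induction with
      | mem z hz =>
          obtain ⟨i, hi, h, rfl⟩ := hz
          rw [← mul_assoc]
          exact AddSubgroup.subset_closure ⟨x * i, hI.mul_mem_left trivial hi, h, rfl⟩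
      | zero => simpa using J.zero_mem
      | add y z _ _ hy hz => rw [mul_add]; exact J.add_mem hy hz
      | neg y _ hy => rw [mul_neg]; exact J.neg_mem hy
    · intro x hx y hy
      induction hx using AddSubgroup.closure_induction with
      | mem z hz =>
          obtain ⟨i, hi, h, rfl⟩ := hz
          rw [mul_assoc, ha h y hy, mul_zero]
          exact J.zero_mem
      | zero => simpa using J.zero_mem
      | add z w _ _ hz hw => rw [add_mul]; exact J.add_mem hz hw
      | neg z _ hz => rw [neg_mul]; exact J.neg_mem hz
    · intro h x hx
      induction hx using AddSubgroup.closure_induction with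
      | mem z hz =>
          obtain ⟨i, hi, h', rfl⟩ := hz
          refine hact_mul_ind J.zero_mem (fun hu hv => J.add_mem hu hv) i
            (hact k H h' a) (fun h₁ h₂ => ?_) h
          rw [hact_hact]
          exact AddSubgroup.subset_closure
            ⟨hact k H h₁ i, hI.hsmul_mem h₁ hi, h₂ * h', rfl⟩
      | zero => rw [hact_zero]; exact J.zero_mem
      | add z w _ _ hz hw => rw [hact_add]; exact J.add_mem hz hw
      | neg z _ hz => rw [hact_neg]; exact J.neg_mem hz
  have hzero : ∀ x ∈ J, ∀ y ∈ J, x * y = 0 := by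
    have hgen : ∀ x ∈ G, ∀ y ∈ J, x * y = 0 := by
      rintro x ⟨i, hi, h, rfl⟩ y hy
      induction hy using AddSubgroup.closure_induction with
      | mem z hz =>
          obtain ⟨i', hi', h', rfl⟩ := hz
          rw [mul_assoc i, ← mul_assoc (hact k H h a), ha h i' hi', zero_mul,
            mul_zero]
      | zero => exact mul_zero _
      | add z w _ _ hz hw => rw [mul_add, hz, hw, add_zero]
      | neg z _ hz => rw [mul_neg, hz, neg_zero]
    intro x hx
    induction hx using AddSubgroup.closure_induction with
    | mem z hz => exact hgen z hz
    | zero => exact fun y _ => zero_mul y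
    | add z w _ _ hz hw => intro y hy; rw [add_mul, hz y hy, hw y hy, add_zero]
    | neg z _ hz => intro y hy; rw [neg_mul, hz y hy, neg_zero]
  have hnil : IsNilpotentSet (J : Set R) := by
    refine ⟨1, fun f hf => ?_⟩
    show prodSeq f 0 * f 1 = 0
    exact hzero (f 0) (hf 0) (f 1) (hf 1)
  have hJ0 : (J : Set R) = {0} := hsp _ hideal hnil
  intro h i hi
  have : i * hact k H h a ∈ (J : Set R) :=
    AddSubgroup.subset_closure ⟨i, hi, h, rfl⟩
  rwa [hJ0] at this

lemma right_to_left (I : Set R) (hI : IsHIdeal k H I) (hsp : IsHSemiprimeIn k H I)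
    (a : R) (ha : ∀ h : H, ∀ i ∈ I, i * hact k H h a = 0) :
    ∀ h : H, ∀ i ∈ I, hact k H h a * i = 0 := by
  set G : Set R := {x | ∃ i ∈ I, ∃ h : H, x = hact k H h a * i} with hG
  set J := AddSubgroup.closure G with hJ
  have hGI : ∀ x ∈ G, x ∈ I := by
    rintro x ⟨i, hi, h, rfl⟩
    exact hI.mul_mem_left trivial hi
  have memI : ∀ x ∈ J, x ∈ I := by
    intro x hx
    induction hx using AddSubgroup.closure_induction with
    | mem y hy => exact hGI y hy
    | zero => exact hI.zero_mem
    | add y z _ _ hy hz => exact hI.add_mem hy hz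
    | neg y _ hy => exact hI.neg_mem hy
  have hideal : IsHIdealIn k H I (J : Set R) := by
    refine ⟨memI, J.zero_mem, fun hx hy => J.add_mem hx hy,
      fun hx => J.neg_mem hx, ?_, ?_, ?_⟩
    · intro x hx y hy
      induction hy using AddSubgroup.closure_induction with
      | mem z hz =>
          obtain ⟨i, hi, h, rfl⟩ := hz
          rw [← mul_assoc, ha h x hx, zero_mul]
          exact J.zero_mem
      | zero => simpa using J.zero_mem
      | add y z _ _ hy hz => rw [mul_add]; exact J.add_mem hy hz
      | neg y _ hy => rw [mul_neg]; exact J.neg_mem hy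
    · intro x hx y hy
      induction hx using AddSubgroup.closure_induction with
      | mem z hz =>
          obtain ⟨i, hi, h, rfl⟩ := hz
          rw [mul_assoc]
          exact AddSubgroup.subset_closure
            ⟨i * y, hI.mul_mem_right hi trivial, h, rfl⟩
      | zero => simpa using J.zero_mem
      | add z w _ _ hz hw => rw [add_mul]; exact J.add_mem hz hw
      | neg z _ hz => rw [neg_mul]; exact J.neg_mem hz
    · intro h x hx
      induction hx using AddSubgroup.closure_induction with
      | mem z hz =>
          obtain ⟨i, hi, h', rfl⟩ := hz
          refine hact_mul_ind J.zero_mem (fun hu hv => J.add_mem hu hv)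
            (hact k H h' a) i (fun h₁ h₂ => ?_) h
          rw [hact_hact]
          exact AddSubgroup.subset_closure
            ⟨hact k H h₂ i, hI.hsmul_mem h₂ hi, h₁ * h', rfl⟩
      | zero => rw [hact_zero]; exact J.zero_mem
      | add z w _ _ hz hw => rw [hact_add]; exact J.add_mem hz hw
      | neg z _ hz => rw [hact_neg]; exact J.neg_mem hz
  have hzero : ∀ x ∈ J, ∀ y ∈ J, x * y = 0 := by
    have hgen : ∀ x ∈ G, ∀ y ∈ J, x * y = 0 := by
      rintro x ⟨i, hi, h, rfl⟩ y hy
      induction hy using AddSubgroup.closure_induction with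
      | mem z hz =>
          obtain ⟨i', hi', h', rfl⟩ := hz
          rw [mul_assoc, ← mul_assoc i, ha h' i hi, zero_mul, mul_zero]
      | zero => exact mul_zero _
      | add z w _ _ hz hw => rw [mul_add, hz, hw, add_zero]
      | neg z _ hz => rw [mul_neg, hz, neg_zero]
    intro x hx
    induction hx using AddSubgroup.closure_induction with
    | mem z hz => exact hgen z hz
    | zero => exact fun y _ => zero_mul y
    | add z w _ _ hz hw => intro y hy; rw [add_mul, hz y hy, hw y hy, add_zero]
    | neg z _ hz => intro y hy; rw [neg_mul, hz y hy, neg_zero]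
  have hnil : IsNilpotentSet (J : Set R) := by
    refine ⟨1, fun f hf => ?_⟩
    show prodSeq f 0 * f 1 = 0
    exact hzero (f 0) (hf 0) (f 1) (hf 1)
  have hJ0 : (J : Set R) = {0} := hsp _ hideal hnil
  intro h i hi
  have : hact k H h a * i ∈ (J : Set R) :=
    AddSubgroup.subset_closure ⟨i, hi, h, rfl⟩
  rwa [hJ0] at this

end Aux

/-- if the `H`-ideal `I` of `R` is `H`-semiprime as a module algebra,
then `I_l = I_r = I*` and `I*` is an `H`-ideal of `R`. -/
theorem stmt6 {k H R : Type*} [CommRing k] [Ring H] [Algebra k H] [Coalgebra k H]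
    [NonUnitalRing R] [Module k R] [SMulCommClass k R R] [IsScalarTower k R R]
    [HModAlg k H R] (I : Set R)
    (hI : IsHIdeal k H I) (hsp : IsHSemiprimeIn k H I) :
    ({a : R | ∀ (h : H), ∀ i ∈ I, hact k H h a * i = 0} =
        {a : R | ∀ (h : H), ∀ i ∈ I, i * hact k H h a = 0}) ∧
    ({a : R | ∀ (h : H), ∀ i ∈ I, hact k H h a * i = 0} =
        {a : R | (∀ (h : H), ∀ i ∈ I, hact k H h a * i = 0) ∧
          (∀ (h : H), ∀ i ∈ I, i * hact k H h a = 0)}) ∧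
    IsHIdeal k H {a : R | (∀ (h : H), ∀ i ∈ I, hact k H h a * i = 0) ∧
        (∀ (h : H), ∀ i ∈ I, i * hact k H h a = 0)} := by
  have hlr := left_to_right I hI hsp
  have hrl := right_to_left I hI hsp
  have heq1 : ({a : R | ∀ (h : H), ∀ i ∈ I, hact k H h a * i = 0} =
      {a : R | ∀ (h : H), ∀ i ∈ I, i * hact k H h a = 0}) := by
    ext a
    exact ⟨fun ha => hlr a ha, fun ha => hrl a ha⟩
  refine ⟨heq1, ?_, ?_⟩
  · ext a
    exact ⟨fun ha => ⟨ha, hlr a ha⟩, fun ha => ha.1⟩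
  · refine ⟨fun _ _ => trivial, ?_, ?_, ?_, ?_, ?_, ?_⟩
    · exact ⟨fun h i _ => by rw [hact_zero, zero_mul],
        fun h i _ => by rw [hact_zero, mul_zero]⟩
    · rintro x y ⟨hx1, hx2⟩ ⟨hy1, hy2⟩
      exact ⟨fun h i hi => by rw [hact_add, add_mul, hx1 h i hi, hy1 h i hi, add_zero],
        fun h i hi => by rw [hact_add, mul_add, hx2 h i hi, hy2 h i hi, add_zero]⟩
    · rintro x ⟨hx1, hx2⟩
      exact ⟨fun h i hi => by rw [hact_neg, neg_mul, hx1 h i hi, neg_zero],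
        fun h i hi => by rw [hact_neg, mul_neg, hx2 h i hi, neg_zero]⟩
    · rintro x _ y ⟨hy1, hy2⟩
      constructor
      · intro h i hi
        have hadd : ∀ {u v : R}, u * i = 0 → v * i = 0 → (u + v) * i = 0 :=
          fun hu hv => by rw [add_mul, hu, hv, add_zero]
        refine hact_mul_ind (P := fun r => r * i = 0) (zero_mul i) hadd x y
          (fun h₁ h₂ => ?_) h
        show hact k H h₁ x * hact k H h₂ y * i = 0
        rw [mul_assoc, hy1 h₂ i hi, mul_zero]
      · intro h i hi
        have hadd : ∀ {u v : R}, i * u = 0 → i * v = 0 → i * (u + v) = 0 :=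
          fun hu hv => by rw [mul_add, hu, hv, add_zero]
        refine hact_mul_ind (P := fun r => i * r = 0) (mul_zero i) hadd x y
          (fun h₁ h₂ => ?_) h
        show i * (hact k H h₁ x * hact k H h₂ y) = 0
        rw [← mul_assoc]
        exact hy2 h₂ _ (hI.mul_mem_right hi trivial)
    · rintro x ⟨hx1, hx2⟩ y _
      constructor
      · intro h i hi
        have hadd : ∀ {u v : R}, u * i = 0 → v * i = 0 → (u + v) * i = 0 :=
          fun hu hv => by rw [add_mul, hu, hv, add_zero]
        refine hact_mul_ind (P := fun r => r * i = 0) (zero_mul i) hadd x y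
          (fun h₁ h₂ => ?_) h
        show hact k H h₁ x * hact k H h₂ y * i = 0
        rw [mul_assoc]
        exact hx1 h₁ _ (hI.mul_mem_left trivial hi)
      · intro h i hi
        have hadd : ∀ {u v : R}, i * u = 0 → i * v = 0 → i * (u + v) = 0 :=
          fun hu hv => by rw [mul_add, hu, hv, add_zero]
        refine hact_mul_ind (P := fun r => i * r = 0) (mul_zero i) hadd x y
          (fun h₁ h₂ => ?_) h
        show i * (hact k H h₁ x * hact k H h₂ y) = 0
        rw [← mul_assoc, hx2 h₁ i hi, zero_mul]
    · rintro h x ⟨hx1, hx2⟩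
      exact ⟨fun h' i hi => by rw [hact_hact]; exact hx1 (h' * h) i hi,
        fun h' i hi => by rw [hact_hact]; exact hx2 (h' * h) i hi⟩
end
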